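/- Let (T_+, T_-) be a tree diagram with n leaves, and let (H_+, H_-) be obtained by attaching the root of T_+ to the first (leftmost) leaf of the source tree of the reduced tree diagram representing a = x_0^3 x_2^{-1} x_0^{-3}, and attaching the root of T_- to the first leaf of its target tree. Then (H_+, H_-) is reduced if and only if (T_+, T_-) is reduced, and the reduced representative of (H_+, H_-) has exactly four more leaves than the reduced representative of (T_+, T_-). -/
import Mathlib


/-- A rooted finite binary tree: every node has 0 or 2 children. -/
inductive BTree where
  | leaf : BTree
  | node : BTree → BTree → BTree
deriving DecidableEq, Repr

namespace BTree

/-- number of leaves -/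
def numLeaves : BTree → ℕ
  | leaf => 1
  | node l r => numLeaves l + numLeaves r

/-- number of internal (binary) nodes, i.e. carets -/
def numInternal : BTree → ℕ
  | leaf => 0
  | node l r => numInternal l + numInternal r + 1

/-- replace the `k`-th leaf (0-indexed, from the left) by the tree `s` -/
def leafSubst : BTree → ℕ → BTree → BTree
  | leaf, 0, s => s
  | leaf, _+1, _ => leaf
  | node l r, k, s =>
      if k < l.numLeaves then node (leafSubst l k s) r
      else node l (leafSubst r (k - l.numLeaves) s)

/-- a caret: a binary node with two leaf children -/
def caret : BTree := node leaf leaf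

/-- attach a caret to the `k`-th leaf -/
def graftAt (t : BTree) (k : ℕ) : BTree := leafSubst t k caret

/-- the right comb (all-right vine) with `n` internal nodes, i.e. `n+1` leaves -/
def rightComb : ℕ → BTree
  | 0 => leaf
  | n+1 => node leaf (rightComb n)

end BTree

open BTree

/-- A tree diagram: a pair (source tree, target tree). -/
abbrev TreeDiagram := BTree × BTree

namespace TreeDiagram

/-- a genuine tree diagram has the same number of leaves in both trees -/
def IsValid (d : TreeDiagram) : Prop := d.1.numLeaves = d.2.numLeaves

/-- elementary expansion: attach a caret to the `k`-th leaf of both trees -/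
def Expand (d d' : TreeDiagram) : Prop :=
  ∃ k, k < d.1.numLeaves ∧ k < d.2.numLeaves ∧
    d' = (graftAt d.1 k, graftAt d.2 k)

/-- elementary reduction: remove a matching pair of carets at corresponding
adjacent leaves of the source and target trees -/
def Reduce (d d' : TreeDiagram) : Prop :=
  ∃ k, k < d'.1.numLeaves ∧ k < d'.2.numLeaves ∧
    d = (graftAt d'.1 k, graftAt d'.2 k)

/-- one move: an elementary expansion or an elementary reduction -/
def Move (d d' : TreeDiagram) : Prop := Expand d d' ∨ Reduce d d'

/-- equivalence of tree diagrams: generated by elementary expansions and reductions -/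
def Equiv : TreeDiagram → TreeDiagram → Prop := Relation.EqvGen Move

/-- a tree diagram is reduced if no elementary reduction applies to it -/
def Reduced (d : TreeDiagram) : Prop := ¬ ∃ d', Reduce d d'

/-- least common refinement of two binary trees -/
def sup : BTree → BTree → BTree
  | .leaf, s => s
  | .node l r, .leaf => .node l r
  | .node l r, .node l' r' => .node (sup l l') (sup r r')

/-- given `t` and a refinement `u` of `t`, the list of trees grafted at the leaves of `t` -/
def decomp : BTree → BTree → List BTree
  | .leaf, u => [u]
  | .node l r, .leaf => [.node l r]
  | .node l r, .node l' r' => decomp l l' ++ decomp r r'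

/-- graft the trees of the list at the successive leaves of `t` -/
def graftList : BTree → List BTree → BTree
  | .leaf, (u :: _) => u
  | .leaf, [] => .leaf
  | .node l r, us => .node (graftList l (us.take l.numLeaves)) (graftList r (us.drop l.numLeaves))

/-- multiplication of tree diagrams: expand both diagrams so that the target tree of the
first coincides with the source tree of the second (concatenation), then compose -/
def mul (d e : TreeDiagram) : TreeDiagram :=
  let m := sup d.2 e.1
  (graftList d.1 (decomp d.2 m), graftList e.2 (decomp e.1 m))

/-- the inverse tree diagram -/
def inv (d : TreeDiagram) : TreeDiagram := (d.2, d.1)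

/-- the trivial tree diagram -/
def one : TreeDiagram := (BTree.leaf, BTree.leaf)

/-- two tree diagrams represent conjugate elements of Thompson's group `F` -/
def IsConjTD (d e : TreeDiagram) : Prop :=
  ∃ g : TreeDiagram, Equiv (mul (mul g d) (inv g)) e

/-- the generator `x₀` as a tree diagram -/
def x0TD : TreeDiagram :=
  (.node (.node .leaf .leaf) .leaf, .node .leaf (.node .leaf .leaf))

/-- the generators `xₙ` as tree diagrams -/
def xTD : ℕ → TreeDiagram
  | 0 => x0TD
  | n+1 => (.node .leaf (xTD n).1, .node .leaf (xTD n).2)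

/-- a positive element: a reduced tree diagram whose target tree is the right comb -/
def Positive (d : TreeDiagram) : Prop :=
  Reduced d ∧ ∃ m, d.1.numLeaves = m + 1 ∧ d.2 = rightComb m

/-- the source tree of the reduced tree diagram of `a = x₀³ x₂⁻¹ x₀⁻³` -/
def aPlus : BTree := .node (.node (.node .leaf .leaf) .leaf) (.node .leaf .leaf)

/-- the target tree of the reduced tree diagram of `a = x₀³ x₂⁻¹ x₀⁻³` -/
def aMinus : BTree := .node (.node (.node .leaf (.node .leaf .leaf)) .leaf) .leaf

/-- graft a tree diagram onto the first (leftmost) leaves of the reduced tree diagram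
of `a = x₀³ x₂⁻¹ x₀⁻³` -/
def graftA (d : TreeDiagram) : TreeDiagram :=
  (leafSubst aPlus 0 d.1, leafSubst aMinus 0 d.2)

end TreeDiagram

open TreeDiagram
namespace BTree

lemma one_le_numLeaves (t : BTree) : 1 ≤ t.numLeaves := by
  induction t with
  | leaf => simp [numLeaves]
  | node l r ihl ihr => simp [numLeaves]; omega

lemma numLeaves_eq_one {t : BTree} (h : t.numLeaves = 1) : t = leaf := by
  cases t with
  | leaf => rfl
  | node l r =>
    have h1 := one_le_numLeaves l
    have h2 := one_le_numLeaves r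
    simp [numLeaves] at h
    omega

lemma leafSubst_leaf_zero (s : BTree) : leafSubst leaf 0 s = s := rfl

lemma leafSubst_node_left {l : BTree} (r : BTree) {k : ℕ} (h : k < l.numLeaves) (s : BTree) :
    leafSubst (node l r) k s = node (leafSubst l k s) r := by
  simp [leafSubst, h]

lemma leafSubst_node_right (l : BTree) {r : BTree} {k : ℕ} (h : l.numLeaves ≤ k) (s : BTree) :
    leafSubst (node l r) k s = node l (leafSubst r (k - l.numLeaves) s) := by
  simp [leafSubst, Nat.not_lt.mpr h]

lemma numLeaves_leafSubst {s : BTree} : ∀ {t : BTree} {k : ℕ}, k < t.numLeaves →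
    (leafSubst t k s).numLeaves + 1 = t.numLeaves + s.numLeaves := by
  intro t
  induction t with
  | leaf =>
    intro k hk
    simp [numLeaves] at hk
    subst hk
    simp [leafSubst_leaf_zero, numLeaves]
    omega
  | node l r ihl ihr =>
    intro k hk
    by_cases h : k < l.numLeaves
    · rw [leafSubst_node_left r h]
      have := ihl h
      simp [numLeaves] at *
      omega
    · rw [leafSubst_node_right l (Nat.not_lt.mp h) s]
      have hk2 : k - l.numLeaves < r.numLeaves := by simp [numLeaves] at hk; omega
      have := ihr hk2
      simp [numLeaves] at *
      omega

lemma numLeaves_graftAt {t : BTree} {k : ℕ} (h : k < t.numLeaves) :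
    (graftAt t k).numLeaves = t.numLeaves + 1 := by
  have h2 := numLeaves_leafSubst (s := caret) h
  have hc : caret.numLeaves = 2 := rfl
  rw [hc] at h2
  show (leafSubst t k caret).numLeaves = t.numLeaves + 1
  omega

lemma graftAt_ne_leaf {t : BTree} {k : ℕ} (h : k < t.numLeaves) : graftAt t k ≠ leaf := by
  intro he
  have := numLeaves_graftAt h
  rw [he] at this
  have := one_le_numLeaves t
  simp [numLeaves] at *
  omega

lemma graftAt_eq_caret {t : BTree} {k : ℕ} (h : k < t.numLeaves) (he : graftAt t k = caret) :
    t = leaf ∧ k = 0 := by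
  have h2 := numLeaves_graftAt h
  rw [he] at h2
  simp [caret, numLeaves] at h2
  have ht := numLeaves_eq_one (t := t) (by omega)
  subst ht
  simp [numLeaves] at h
  exact ⟨rfl, h⟩

lemma graftAt_node_left {l : BTree} (r : BTree) {k : ℕ} (h : k < l.numLeaves) :
    graftAt (node l r) k = node (graftAt l k) r := leafSubst_node_left r h caret

lemma graftAt_node_right (l : BTree) {r : BTree} {k : ℕ} (h : l.numLeaves ≤ k) :
    graftAt (node l r) k = node l (graftAt r (k - l.numLeaves)) := leafSubst_node_right l h caret

lemma graftAt_leaf : graftAt leaf 0 = caret := rfl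

lemma graft_inj : ∀ {u u' : BTree} {k : ℕ}, k < u.numLeaves → k < u'.numLeaves →
    graftAt u k = graftAt u' k → u = u' := by
  intro u
  induction u with
  | leaf =>
    intro u' k hk hk' he
    simp [numLeaves] at hk; subst hk
    rw [graftAt_leaf] at he
    have := graftAt_eq_caret hk' he.symm
    exact this.1.symm
  | node l r ihl ihr =>
    intro u' k hk hk' he
    cases u' with
    | leaf =>
      simp [numLeaves] at hk'; subst hk'
      rw [graftAt_leaf] at he
      have := graftAt_eq_caret hk he
      exact absurd this.1 (by simp)
    | node l' r' =>
      by_cases h1 : k < l.numLeaves <;> by_cases h2 : k < l'.numLeaves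
      · rw [graftAt_node_left r h1, graftAt_node_left r' h2] at he
        injection he with hL hR
        rw [ihl h1 h2 hL, hR]
      · rw [graftAt_node_left r h1, graftAt_node_right l' (Nat.not_lt.mp h2)] at he
        injection he with hL hR
        rw [← hL] at h2
        exact absurd (numLeaves_graftAt h1 ▸ Nat.lt_succ_of_lt h1) h2
      · rw [graftAt_node_right l (Nat.not_lt.mp h1), graftAt_node_left r' h2] at he
        injection he with hL hR
        rw [hL] at h1
        exact absurd (numLeaves_graftAt h2 ▸ Nat.lt_succ_of_lt h2) h1
      · have h1' := Nat.not_lt.mp h1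
        have h2' := Nat.not_lt.mp h2
        rw [graftAt_node_right l h1', graftAt_node_right l' h2'] at he
        injection he with hL hR
        subst hL
        have hkr : k - l.numLeaves < r.numLeaves := by simp [numLeaves] at hk; omega
        have hkr' : k - l.numLeaves < r'.numLeaves := by simp [numLeaves] at hk'; omega
        rw [ihr hkr hkr' hR]

lemma graft_sep : ∀ {u u' : BTree} {k k' : ℕ}, k < k' → k < u.numLeaves → k' < u'.numLeaves →
    graftAt u k = graftAt u' k' →
    ∃ v : BTree, k' - 1 < v.numLeaves ∧ k < v.numLeaves ∧
      u = graftAt v (k' - 1) ∧ u' = graftAt v k := by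
  intro u
  induction u with
  | leaf =>
    intro u' k k' hkk hk hk' he
    simp [numLeaves] at hk; subst hk
    rw [graftAt_leaf] at he
    have h2 := numLeaves_graftAt hk'
    rw [← he] at h2
    simp [caret, numLeaves] at h2
    have := numLeaves_eq_one (t := u') (by omega)
    subst this
    simp [numLeaves] at hk'
    omega
  | node l r ihl ihr =>
    intro u' k k' hkk hk hk' he
    cases u' with
    | leaf => simp [numLeaves] at hk'; omega
    | node l' r' =>
      by_cases h1 : k < l.numLeaves <;> by_cases h2 : k' < l'.numLeaves
      · -- both left
        rw [graftAt_node_left r h1, graftAt_node_left r' h2] at he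
        injection he with hL hR
        obtain ⟨w, hw1, hw2, hw3, hw4⟩ := ihl hkk h1 h2 hL
        refine ⟨node w r, ?_, ?_, ?_, ?_⟩
        · simp [numLeaves]; omega
        · simp [numLeaves]; omega
        · rw [graftAt_node_left r hw1, ← hw3, hR]
        · rw [graftAt_node_left r hw2, ← hw4, hR]
      · -- k in left, k' in right
        have h2' := Nat.not_lt.mp h2
        rw [graftAt_node_left r h1, graftAt_node_right l' h2'] at he
        injection he with hL hR
        have hl' : l'.numLeaves = l.numLeaves + 1 := by rw [← hL]; exact numLeaves_graftAt h1
        have hkr' : k' - l'.numLeaves < r'.numLeaves := by simp [numLeaves] at hk'; omega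
        refine ⟨node l r', ?_, ?_, ?_, ?_⟩
        · simp [numLeaves]; omega
        · simp [numLeaves]; omega
        · rw [graftAt_node_right l (by omega : l.numLeaves ≤ k' - 1), hR]
          congr 1
          congr 1
          omega
        · rw [graftAt_node_left r' h1, hL]
      · -- k in right, k' in left : contradiction
        have h1' := Nat.not_lt.mp h1
        rw [graftAt_node_right l h1', graftAt_node_left r' h2] at he
        injection he with hL hR
        have : l.numLeaves = l'.numLeaves + 1 := by rw [hL]; exact numLeaves_graftAt h2
        omega
      · -- both right
        have h1' := Nat.not_lt.mp h1
        have h2' := Nat.not_lt.mp h2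
        rw [graftAt_node_right l h1', graftAt_node_right l' h2'] at he
        injection he with hL hR
        subst hL
        have hkr : k - l.numLeaves < r.numLeaves := by simp [numLeaves] at hk; omega
        have hkr' : k' - l.numLeaves < r'.numLeaves := by simp [numLeaves] at hk'; omega
        obtain ⟨w, hw1, hw2, hw3, hw4⟩ := ihr (by omega) hkr hkr' hR
        refine ⟨node l w, ?_, ?_, ?_, ?_⟩
        · simp [numLeaves]; omega
        · simp [numLeaves]; omega
        · rw [graftAt_node_right l (by omega : l.numLeaves ≤ k' - 1), hw3]
          congr 2
          omega
        · rw [graftAt_node_right l (by omega : l.numLeaves ≤ k), hw4]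

end BTree
namespace TreeDiagram

open BTree

lemma reduce_diamond {d e1 e2 : TreeDiagram} (h1 : Reduce d e1) (h2 : Reduce d e2) :
    e1 = e2 ∨ ∃ f, Reduce e1 f ∧ Reduce e2 f := by
  obtain ⟨k, hk1, hk2, he⟩ := h1
  obtain ⟨k', hk1', hk2', he'⟩ := h2
  have e11 : d.1 = graftAt e1.1 k := by rw [he]
  have e12 : d.2 = graftAt e1.2 k := by rw [he]
  have e21 : d.1 = graftAt e2.1 k' := by rw [he']
  have e22 : d.2 = graftAt e2.2 k' := by rw [he']
  rcases lt_trichotomy k k' with h | h | h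
  · right
    obtain ⟨v1, hv1a, hv1b, hv1c, hv1d⟩ := graft_sep h hk1 hk1' (e11 ▸ e21)
    obtain ⟨v2, hv2a, hv2b, hv2c, hv2d⟩ := graft_sep h hk2 hk2' (e12 ▸ e22)
    exact ⟨(v1, v2), ⟨k' - 1, hv1a, hv2a, Prod.ext hv1c hv2c⟩,
      ⟨k, hv1b, hv2b, Prod.ext hv1d hv2d⟩⟩
  · left
    subst h
    exact Prod.ext (graft_inj hk1 hk1' (e11 ▸ e21)) (graft_inj hk2 hk2' (e12 ▸ e22))
  · right
    obtain ⟨v1, hv1a, hv1b, hv1c, hv1d⟩ := graft_sep h hk1' hk1 (e21 ▸ e11)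
    obtain ⟨v2, hv2a, hv2b, hv2c, hv2d⟩ := graft_sep h hk2' hk2 (e22 ▸ e12)
    exact ⟨(v1, v2), ⟨k', hv1b, hv2b, Prod.ext hv1d hv2d⟩,
      ⟨k - 1, hv1a, hv2a, Prod.ext hv1c hv2c⟩⟩

lemma expand_iff_reduce {d e : TreeDiagram} : Expand d e ↔ Reduce e d := Iff.rfl

lemma equiv_eqvGen_reduce {d e : TreeDiagram} (h : Equiv d e) : Relation.EqvGen Reduce d e := by
  induction h with
  | rel x y hxy =>
    rcases hxy with hE | hR
    · exact (Relation.EqvGen.rel y x hE).symm y x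
    · exact Relation.EqvGen.rel x y hR
  | refl x => exact Relation.EqvGen.refl x
  | symm x y _ ih => exact ih.symm x y
  | trans x y z _ _ ih1 ih2 => exact ih1.trans x y z ih2

lemma eqvGen_join : ∀ {d e : TreeDiagram}, Relation.EqvGen Reduce d e →
    Relation.Join (Relation.ReflTransGen Reduce) d e := by
  have cr := Relation.equivalence_join_reflTransGen (r := Reduce)
    (fun a b c hab hac => by
      rcases reduce_diamond hab hac with he | ⟨f, hf1, hf2⟩
      · exact ⟨b, Relation.ReflGen.refl, he ▸ Relation.ReflTransGen.refl⟩
      · exact ⟨f, Relation.ReflGen.single hf1, Relation.ReflTransGen.single hf2⟩)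
  intro d e h'
  induction h' with
  | rel x y hxy => exact ⟨y, Relation.ReflTransGen.single hxy, Relation.ReflTransGen.refl⟩
  | refl x => exact cr.refl x
  | symm x y _ ih => exact cr.symm ih
  | trans x y z _ _ ih1 ih2 => exact cr.trans ih1 ih2

lemma equiv_join {d e : TreeDiagram} (h : Equiv d e) :
    Relation.Join (Relation.ReflTransGen Reduce) d e :=
  eqvGen_join (equiv_eqvGen_reduce h)

lemma reduced_unique {d e : TreeDiagram} (hd : Reduced d) (he : Reduced e) (h : Equiv d e) :
    d = e := by
  obtain ⟨c, hc1, hc2⟩ := equiv_join h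
  have h1 : d = c := by
    rcases Relation.ReflTransGen.cases_head hc1 with h | ⟨x, hx, _⟩
    · exact h
    · exact absurd ⟨x, hx⟩ hd
  have h2 : e = c := by
    rcases Relation.ReflTransGen.cases_head hc2 with h | ⟨x, hx, _⟩
    · exact h
    · exact absurd ⟨x, hx⟩ he
  rw [h1, h2]

lemma isValid_of_move {d e : TreeDiagram} (h : Move d e) (hv : IsValid d) : IsValid e := by
  rcases h with ⟨k, hk1, hk2, he⟩ | ⟨k, hk1, hk2, he⟩
  · have : e = (graftAt d.1 k, graftAt d.2 k) := he
    rw [this]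
    unfold IsValid at *
    simp [numLeaves_graftAt hk1, numLeaves_graftAt hk2, hv]
  · have h1 : d.1 = graftAt e.1 k := by rw [he]
    have h2 : d.2 = graftAt e.2 k := by rw [he]
    unfold IsValid at *
    rw [h1, h2, numLeaves_graftAt hk1, numLeaves_graftAt hk2] at hv
    omega

lemma isValid_of_move' {d e : TreeDiagram} (h : Move d e) (hv : IsValid e) : IsValid d := by
  rcases h with hE | hR
  · exact isValid_of_move (Or.inr hE) hv
  · exact isValid_of_move (Or.inl hR) hv

lemma isValid_iff_of_equiv : ∀ {d e : TreeDiagram}, Equiv d e → (IsValid d ↔ IsValid e) := by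
  intro d e h
  induction h with
  | rel x y hxy => exact ⟨isValid_of_move hxy, isValid_of_move' hxy⟩
  | refl x => exact Iff.rfl
  | symm x y _ ih => exact ih.symm
  | trans x y z _ _ ih1 ih2 => exact ih1.trans ih2

end TreeDiagram
namespace TreeDiagram

open BTree

lemma aPlus_subst (T : BTree) :
    leafSubst aPlus 0 T = node (node (node T leaf) leaf) caret := by
  have h1 : (0:ℕ) < (node (node leaf leaf) leaf).numLeaves := by simp [numLeaves]
  have h2 : (0:ℕ) < (node leaf leaf).numLeaves := by simp [numLeaves]
  have h3 : (0:ℕ) < BTree.leaf.numLeaves := by simp [numLeaves]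
  rw [show aPlus = node (node (node leaf leaf) leaf) (node leaf leaf) from rfl,
    leafSubst_node_left _ h1, leafSubst_node_left _ h2, leafSubst_node_left _ h3,
    leafSubst_leaf_zero]
  rfl

lemma aMinus_subst (S : BTree) :
    leafSubst aMinus 0 S = node (node (node S caret) leaf) leaf := by
  have h1 : (0:ℕ) < (node (node leaf (node leaf leaf)) leaf).numLeaves := by simp [numLeaves]
  have h2 : (0:ℕ) < (node leaf (node leaf leaf)).numLeaves := by simp [numLeaves]
  have h3 : (0:ℕ) < BTree.leaf.numLeaves := by simp [numLeaves]
  rw [show aMinus = node (node (node leaf (node leaf leaf)) leaf) leaf from rfl,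
    leafSubst_node_left _ h1, leafSubst_node_left _ h2, leafSubst_node_left _ h3,
    leafSubst_leaf_zero]
  rfl

lemma numLeaves_aPlus_subst (T : BTree) :
    (leafSubst aPlus 0 T).numLeaves = T.numLeaves + 4 := by
  rw [aPlus_subst]
  simp [numLeaves, caret]

lemma numLeaves_aMinus_subst (S : BTree) :
    (leafSubst aMinus 0 S).numLeaves = S.numLeaves + 4 := by
  rw [aMinus_subst]
  simp [numLeaves, caret]

lemma aPlus_graft_comm {T : BTree} {k : ℕ} (h : k < T.numLeaves) :
    graftAt (leafSubst aPlus 0 T) k = leafSubst aPlus 0 (graftAt T k) := by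
  have h1 : k < (node (node T leaf) leaf).numLeaves := by simp [numLeaves]; omega
  have h2 : k < (node T leaf).numLeaves := by simp [numLeaves]; omega
  rw [aPlus_subst, aPlus_subst, graftAt_node_left _ h1, graftAt_node_left _ h2,
    graftAt_node_left _ h]

lemma aMinus_graft_comm {S : BTree} {k : ℕ} (h : k < S.numLeaves) :
    graftAt (leafSubst aMinus 0 S) k = leafSubst aMinus 0 (graftAt S k) := by
  have h1 : k < (node (node S caret) leaf).numLeaves := by simp [numLeaves, caret]; omega
  have h2 : k < (node S caret).numLeaves := by simp [numLeaves, caret]; omega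
  rw [aMinus_subst, aMinus_subst, graftAt_node_left _ h1, graftAt_node_left _ h2,
    graftAt_node_left _ h]

lemma caretPlus {T w : BTree} {k : ℕ} (hk : k < w.numLeaves)
    (h : graftAt w k = node (node (node T leaf) leaf) caret) :
    (∃ u, k < u.numLeaves ∧ T = graftAt u k) ∨ k = T.numLeaves + 2 ∨ (T = leaf ∧ k = 0) := by
  cases w with
  | leaf =>
    simp [numLeaves] at hk; subst hk
    rw [graftAt_leaf] at h
    exact absurd h (by simp [caret])
  | node a b =>
    by_cases h1 : k < a.numLeaves
    · rw [graftAt_node_left b h1] at h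
      injection h with hL hR
      -- hL : graftAt a k = node (node T leaf) leaf, hR : b = caret
      cases a with
      | leaf =>
        simp [numLeaves] at h1; subst h1
        rw [graftAt_leaf] at hL
        exact absurd hL (by simp [caret])
      | node c e =>
        by_cases h2 : k < c.numLeaves
        · rw [graftAt_node_left e h2] at hL
          injection hL with hL2 hR2
          -- hL2 : graftAt c k = node T leaf, hR2 : e = leaf
          cases c with
          | leaf =>
            simp [numLeaves] at h2; subst h2
            rw [graftAt_leaf] at hL2
            injection hL2 with hx hy
            exact Or.inr (Or.inr ⟨hx.symm, rfl⟩)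
          | node p q =>
            by_cases h3 : k < p.numLeaves
            · rw [graftAt_node_left q h3] at hL2
              injection hL2 with hL3 hR3
              exact Or.inl ⟨p, h3, hL3.symm⟩
            · have h3' := Nat.not_lt.mp h3
              rw [graftAt_node_right p h3'] at hL2
              injection hL2 with hL3 hR3
              have hq : k - p.numLeaves < q.numLeaves := by
                simp [numLeaves] at h2; omega
              exact absurd hR3 (graftAt_ne_leaf hq)
        · have h2' := Nat.not_lt.mp h2
          rw [graftAt_node_right c h2'] at hL
          injection hL with hL2 hR2
          have he : k - c.numLeaves < e.numLeaves := by
            simp [numLeaves] at h1; omega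
          exact absurd hR2 (graftAt_ne_leaf he)
    · have h1' := Nat.not_lt.mp h1
      rw [graftAt_node_right a h1'] at h
      injection h with hL hR
      -- hL : a = node (node T leaf) leaf, hR : graftAt b (k - a.nl) = caret
      have hb : k - a.numLeaves < b.numLeaves := by simp [numLeaves] at hk; omega
      obtain ⟨hb1, hb2⟩ := graftAt_eq_caret hb hR
      right; left
      have : a.numLeaves = T.numLeaves + 2 := by
        rw [hL]; simp [numLeaves]
      omega

lemma caretMinus {S w : BTree} {k : ℕ} (hk : k < w.numLeaves)
    (h : graftAt w k = node (node (node S caret) leaf) leaf) :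
    (∃ v, k < v.numLeaves ∧ S = graftAt v k) ∨ k = S.numLeaves := by
  cases w with
  | leaf =>
    simp [numLeaves] at hk; subst hk
    rw [graftAt_leaf] at h
    exact absurd h (by simp [caret])
  | node a b =>
    by_cases h1 : k < a.numLeaves
    · rw [graftAt_node_left b h1] at h
      injection h with hL hR
      -- hL : graftAt a k = node (node S caret) leaf
      cases a with
      | leaf =>
        simp [numLeaves] at h1; subst h1
        rw [graftAt_leaf] at hL
        exact absurd hL (by simp [caret])
      | node c e =>
        by_cases h2 : k < c.numLeaves
        · rw [graftAt_node_left e h2] at hL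
          injection hL with hL2 hR2
          -- hL2 : graftAt c k = node S caret
          cases c with
          | leaf =>
            simp [numLeaves] at h2; subst h2
            rw [graftAt_leaf] at hL2
            injection hL2 with hx hy
            exact absurd hy.symm (by simp [caret])
          | node p q =>
            by_cases h3 : k < p.numLeaves
            · rw [graftAt_node_left q h3] at hL2
              injection hL2 with hL3 hR3
              exact Or.inl ⟨p, h3, hL3.symm⟩
            · have h3' := Nat.not_lt.mp h3
              rw [graftAt_node_right p h3'] at hL2
              injection hL2 with hL3 hR3
              have hq : k - p.numLeaves < q.numLeaves := by
                simp [numLeaves] at h2; omega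
              obtain ⟨hq1, hq2⟩ := graftAt_eq_caret hq hR3
              right
              have : p.numLeaves = S.numLeaves := by rw [hL3]
              omega
        · have h2' := Nat.not_lt.mp h2
          rw [graftAt_node_right c h2'] at hL
          injection hL with hL2 hR2
          have he : k - c.numLeaves < e.numLeaves := by
            simp [numLeaves] at h1; omega
          exact absurd hR2 (graftAt_ne_leaf he)
    · have h1' := Nat.not_lt.mp h1
      rw [graftAt_node_right a h1'] at h
      injection h with hL hR
      have hb : k - a.numLeaves < b.numLeaves := by simp [numLeaves] at hk; omega
      exact absurd hR (graftAt_ne_leaf hb)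

lemma move_graftA {d e : TreeDiagram} (h : Move d e) : Move (graftA d) (graftA e) := by
  rcases h with ⟨k, hk1, hk2, he⟩ | ⟨k, hk1, hk2, he⟩
  · left
    refine ⟨k, ?_, ?_, ?_⟩
    · show k < (leafSubst aPlus 0 d.1).numLeaves
      rw [numLeaves_aPlus_subst]; omega
    · show k < (leafSubst aMinus 0 d.2).numLeaves
      rw [numLeaves_aMinus_subst]; omega
    · show graftA e = (graftAt (leafSubst aPlus 0 d.1) k, graftAt (leafSubst aMinus 0 d.2) k)
      rw [aPlus_graft_comm hk1, aMinus_graft_comm hk2]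
      unfold graftA
      rw [he]
  · right
    refine ⟨k, ?_, ?_, ?_⟩
    · show k < (leafSubst aPlus 0 e.1).numLeaves
      rw [numLeaves_aPlus_subst]; omega
    · show k < (leafSubst aMinus 0 e.2).numLeaves
      rw [numLeaves_aMinus_subst]; omega
    · show graftA d = (graftAt (leafSubst aPlus 0 e.1) k, graftAt (leafSubst aMinus 0 e.2) k)
      rw [aPlus_graft_comm hk1, aMinus_graft_comm hk2]
      unfold graftA
      rw [he]

lemma equiv_graftA : ∀ {d e : TreeDiagram}, Equiv d e → Equiv (graftA d) (graftA e) := by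
  intro d e h
  induction h with
  | rel x y hxy => exact Relation.EqvGen.rel _ _ (move_graftA hxy)
  | refl x => exact Relation.EqvGen.refl _
  | symm x y _ ih => exact ih.symm _ _
  | trans x y z _ _ ih1 ih2 => exact ih1.trans _ _ _ ih2

lemma reduced_graftA_iff {d : TreeDiagram} (hd : IsValid d) :
    Reduced (graftA d) ↔ Reduced d := by
  constructor
  · intro h
    intro ⟨e, k, hk1, hk2, he⟩
    apply h
    refine ⟨graftA e, k, ?_, ?_, ?_⟩
    · show k < (leafSubst aPlus 0 e.1).numLeaves
      rw [numLeaves_aPlus_subst]; omega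
    · show k < (leafSubst aMinus 0 e.2).numLeaves
      rw [numLeaves_aMinus_subst]; omega
    · show graftA d = (graftAt (leafSubst aPlus 0 e.1) k, graftAt (leafSubst aMinus 0 e.2) k)
      rw [aPlus_graft_comm hk1, aMinus_graft_comm hk2]
      unfold graftA
      rw [he]
  · intro h
    intro ⟨e, k, hk1, hk2, he⟩
    have e1 : graftAt e.1 k = node (node (node d.1 leaf) leaf) caret := by
      have : (graftA d).1 = graftAt e.1 k := by rw [he]
      rw [← this]
      show leafSubst aPlus 0 d.1 = _
      exact aPlus_subst d.1
    have e2 : graftAt e.2 k = node (node (node d.2 caret) leaf) leaf := by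
      have : (graftA d).2 = graftAt e.2 k := by rw [he]
      rw [← this]
      show leafSubst aMinus 0 d.2 = _
      exact aMinus_subst d.2
    have hval : d.1.numLeaves = d.2.numLeaves := hd
    rcases caretPlus hk1 e1 with ⟨u, hu1, hu2⟩ | hP | ⟨hT, hk0⟩
    · rcases caretMinus hk2 e2 with ⟨v, hv1, hv2⟩ | hM
      · exact h ⟨(u, v), k, hu1, hv1, Prod.ext hu2 hv2⟩
      · have : d.1.numLeaves = u.numLeaves + 1 := by rw [hu2]; exact numLeaves_graftAt hu1
        omega
    · rcases caretMinus hk2 e2 with ⟨v, hv1, hv2⟩ | hM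
      · have : d.2.numLeaves = v.numLeaves + 1 := by rw [hv2]; exact numLeaves_graftAt hv1
        omega
      · omega
    · rcases caretMinus hk2 e2 with ⟨v, hv1, hv2⟩ | hM
      · have : d.2.numLeaves = v.numLeaves + 1 := by rw [hv2]; exact numLeaves_graftAt hv1
        have := one_le_numLeaves v
        have : d.1.numLeaves = 1 := by rw [hT]; rfl
        omega
      · have : d.1.numLeaves = 1 := by rw [hT]; rfl
        omega

end TreeDiagram

/-- Grafting a tree diagram `(T₊, T₋)` onto the first leaves of the reduced tree diagram of
`a = x₀³ x₂⁻¹ x₀⁻³` gives a tree diagram `(H₊, H₋)` that is reduced iff `(T₊, T₋)` is, and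
whose reduced representative has exactly four more leaves than that of `(T₊, T₋)`. -/
theorem graftA_reduced_iff_and_leaves (d : TreeDiagram) (hd : IsValid d) :
    (Reduced (graftA d) ↔ Reduced d) ∧
    ∀ rd rH : TreeDiagram,
      Reduced rd → TreeDiagram.Equiv d rd →
      Reduced rH → TreeDiagram.Equiv (graftA d) rH →
      rH.1.numLeaves = rd.1.numLeaves + 4 := by
  constructor
  · exact reduced_graftA_iff hd
  · intro rd rH hrd hdrd hrH hgrH
    have hrdv : IsValid rd := (isValid_iff_of_equiv hdrd).mp hd
    have hred : Reduced (graftA rd) := (reduced_graftA_iff hrdv).mpr hrd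
    have heq : TreeDiagram.Equiv rH (graftA rd) :=
      Relation.EqvGen.trans _ _ _ (hgrH.symm _ _) (equiv_graftA hdrd)
    have hfin := reduced_unique hrH hred heq
    rw [hfin]
    show (leafSubst aPlus 0 rd.1).numLeaves = rd.1.numLeaves + 4
    exact numLeaves_aPlus_subst rd.1
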